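/- For every integer n ≥ 2, working over the field ℚ(T) of rational functions, the full-twist matrix and the limit matrix satisfy the absorption identities Ω_n P_n = P_n and P_n Ω_n = P_n; consequently P_n Ω_n P_n = P_n. -/

import Mathlib

open scoped Matrix


/-- The unreduced Burau generator matrix over the field `ℚ(T)` of rational functions
(0-indexed: rows/columns `k` and `k+1` carry the nontrivial block). -/
noncomputable def burauGenQ (n : ℕ) (k : ℕ) : Matrix (Fin n) (Fin n) (RatFunc ℚ) :=
  Matrix.of fun i j =>
    if (i : ℕ) = k ∧ (j : ℕ) = k then 1 - RatFunc.X
    else if (i : ℕ) = k ∧ (j : ℕ) = k + 1 then RatFunc.X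
    else if (i : ℕ) = k + 1 ∧ (j : ℕ) = k then 1
    else if (i : ℕ) = k + 1 ∧ (j : ℕ) = k + 1 then 0
    else if i = j then 1 else 0

/-- The full twist matrix `Ω_n = (ψ_1 ψ_2 ⋯ ψ_{n-1})^n` over `ℚ(T)`. -/
noncomputable def fullTwistQ (n : ℕ) : Matrix (Fin n) (Fin n) (RatFunc ℚ) :=
  (((List.range (n - 1)).map fun k => burauGenQ n k).prod) ^ n

/-- The limit matrix `P_n` with entries `(P_n)_{ij} = T^{j-1}/(1 + T + ⋯ + T^{n-1})`
(0-indexed: numerator `T^j`). -/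
noncomputable def limitMatrix (n : ℕ) : Matrix (Fin n) (Fin n) (RatFunc ℚ) :=
  Matrix.of fun _ j => RatFunc.X ^ (j : ℕ) / ∑ m ∈ Finset.range n, RatFunc.X ^ m

lemma gen_mulVec_one (n k : ℕ) (hk : k + 1 < n) :
    burauGenQ n k *ᵥ (fun _ => (1 : RatFunc ℚ)) = fun _ => 1 := by
  have hk0 : k < n := Nat.lt_of_succ_lt hk
  set a : Fin n := ⟨k, hk0⟩ with ha
  set b : Fin n := ⟨k + 1, hk⟩ with hb
  funext i
  simp only [Matrix.mulVec, dotProduct, burauGenQ, Matrix.of_apply, mul_one]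
  by_cases hia : (i : ℕ) = k
  · have hi : i = a := Fin.ext hia
    subst hi
    have key : ∀ j : Fin n,
        (if (a : ℕ) = k ∧ (j : ℕ) = k then 1 - RatFunc.X
        else if (a : ℕ) = k ∧ (j : ℕ) = k + 1 then RatFunc.X
        else if (a : ℕ) = k + 1 ∧ (j : ℕ) = k then 1
        else if (a : ℕ) = k + 1 ∧ (j : ℕ) = k + 1 then (0 : RatFunc ℚ)
        else if a = j then 1 else 0)
        = (if j = a then 1 - RatFunc.X else 0) + (if j = b then RatFunc.X else 0) := by
      intro j
      by_cases h1 : j = a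
      · subst h1; simp [ha, hb, Fin.ext_iff]
      · by_cases h2 : j = b
        · subst h2; simp [ha, hb, Fin.ext_iff]
        · have e1 : ¬ (j : ℕ) = k := by simpa [ha, Fin.ext_iff] using h1
          have e2 : ¬ (j : ℕ) = k + 1 := by simpa [hb, Fin.ext_iff] using h2
          have e3 : ¬ a = j := fun h => h1 h.symm
          have h1' : ¬ j = (⟨k, hk0⟩ : Fin n) := h1
          have h2' : ¬ j = (⟨k + 1, hk⟩ : Fin n) := h2
          simp [ha, hb, e1, e2, e3, h1', h2']
          exact fun h => h1' h.symm
    rw [Finset.sum_congr rfl fun j _ => key j, Finset.sum_add_distrib,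
      Finset.sum_ite_eq', Finset.sum_ite_eq']
    simp
  · by_cases hib : (i : ℕ) = k + 1
    · have hi : i = b := Fin.ext hib
      subst hi
      have key : ∀ j : Fin n,
          (if (b : ℕ) = k ∧ (j : ℕ) = k then 1 - RatFunc.X
          else if (b : ℕ) = k ∧ (j : ℕ) = k + 1 then RatFunc.X
          else if (b : ℕ) = k + 1 ∧ (j : ℕ) = k then 1
          else if (b : ℕ) = k + 1 ∧ (j : ℕ) = k + 1 then (0 : RatFunc ℚ)
          else if b = j then 1 else 0)
          = (if j = a then 1 else 0) := by
        intro j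
        by_cases h1 : j = a
        · subst h1; simp [ha, hb, Fin.ext_iff]
        · by_cases h2 : j = b
          · subst h2; simp [ha, hb, Fin.ext_iff]
          · have e1 : ¬ (j : ℕ) = k := by simpa [ha, Fin.ext_iff] using h1
            have e2 : ¬ (j : ℕ) = k + 1 := by simpa [hb, Fin.ext_iff] using h2
            have e3 : ¬ b = j := fun h => h2 h.symm
            have h1' : ¬ j = (⟨k, hk0⟩ : Fin n) := h1
            simp [ha, hb, e1, e2, e3, h1']
            exact fun h => h2 h.symm
      rw [Finset.sum_congr rfl fun j _ => key j, Finset.sum_ite_eq']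
      simp
    · have key : ∀ j : Fin n,
          (if (i : ℕ) = k ∧ (j : ℕ) = k then 1 - RatFunc.X
          else if (i : ℕ) = k ∧ (j : ℕ) = k + 1 then RatFunc.X
          else if (i : ℕ) = k + 1 ∧ (j : ℕ) = k then 1
          else if (i : ℕ) = k + 1 ∧ (j : ℕ) = k + 1 then (0 : RatFunc ℚ)
          else if i = j then 1 else 0)
          = (if j = i then 1 else 0) := by
        intro j
        simp [hia, hib, eq_comm]
      rw [Finset.sum_congr rfl fun j _ => key j, Finset.sum_ite_eq']
      simp

lemma gen_vecMul_pow (n k : ℕ) (hk : k + 1 < n) :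
    (fun i : Fin n => RatFunc.X ^ (i : ℕ)) ᵥ* burauGenQ n k
      = fun i : Fin n => RatFunc.X ^ (i : ℕ) := by
  have hk0 : k < n := Nat.lt_of_succ_lt hk
  set a : Fin n := ⟨k, hk0⟩ with ha
  set b : Fin n := ⟨k + 1, hk⟩ with hb
  funext j
  simp only [Matrix.vecMul, dotProduct, burauGenQ, Matrix.of_apply]
  by_cases hja : (j : ℕ) = k
  · have hj : j = a := Fin.ext hja
    subst hj
    have key : ∀ i : Fin n,
        (RatFunc.X ^ (i : ℕ) *
          if (i : ℕ) = k ∧ (a : ℕ) = k then 1 - RatFunc.X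
          else if (i : ℕ) = k ∧ (a : ℕ) = k + 1 then RatFunc.X
          else if (i : ℕ) = k + 1 ∧ (a : ℕ) = k then 1
          else if (i : ℕ) = k + 1 ∧ (a : ℕ) = k + 1 then (0 : RatFunc ℚ)
          else if i = a then 1 else 0)
        = (if i = a then RatFunc.X ^ k * (1 - RatFunc.X) else 0)
          + (if i = b then RatFunc.X ^ (k + 1) else 0) := by
      intro i
      by_cases h1 : i = a
      · subst h1; simp [ha, hb, Fin.ext_iff]
      · by_cases h2 : i = b
        · subst h2; simp [ha, hb, Fin.ext_iff]
        · have e1 : ¬ (i : ℕ) = k := by simpa [ha, Fin.ext_iff] using h1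
          have e2 : ¬ (i : ℕ) = k + 1 := by simpa [hb, Fin.ext_iff] using h2
          have h2' : ¬ i = (⟨k + 1, hk⟩ : Fin n) := h2
          simp [ha, hb, e1, e2, h1, h2']
          by_cases h : i = ⟨k, hk0⟩
          · exact absurd h h1
          · rw [if_neg h, if_neg h]
    rw [Finset.sum_congr rfl fun i _ => key i, Finset.sum_add_distrib,
      Finset.sum_ite_eq', Finset.sum_ite_eq']
    simp [ha]
    ring
  · by_cases hjb : (j : ℕ) = k + 1
    · have hj : j = b := Fin.ext hjb
      subst hj
      have key : ∀ i : Fin n,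
          (RatFunc.X ^ (i : ℕ) *
            if (i : ℕ) = k ∧ (b : ℕ) = k then 1 - RatFunc.X
            else if (i : ℕ) = k ∧ (b : ℕ) = k + 1 then RatFunc.X
            else if (i : ℕ) = k + 1 ∧ (b : ℕ) = k then 1
            else if (i : ℕ) = k + 1 ∧ (b : ℕ) = k + 1 then (0 : RatFunc ℚ)
            else if i = b then 1 else 0)
          = (if i = a then RatFunc.X ^ k * RatFunc.X else 0) := by
        intro i
        by_cases h1 : i = a
        · subst h1; simp [ha, hb, Fin.ext_iff]
        · by_cases h2 : i = b
          · subst h2; simp [ha, hb, Fin.ext_iff]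
          · have e1 : ¬ (i : ℕ) = k := by simpa [ha, Fin.ext_iff] using h1
            have e2 : ¬ (i : ℕ) = k + 1 := by simpa [hb, Fin.ext_iff] using h2
            have h1' : ¬ i = (⟨k, hk0⟩ : Fin n) := h1
            simp [ha, hb, e1, e2, h2, h1']
            exact fun h => absurd h h2
      rw [Finset.sum_congr rfl fun i _ => key i, Finset.sum_ite_eq']
      simp [hb, pow_succ]
    · have key : ∀ i : Fin n,
          (RatFunc.X ^ (i : ℕ) *
            if (i : ℕ) = k ∧ (j : ℕ) = k then 1 - RatFunc.X
            else if (i : ℕ) = k ∧ (j : ℕ) = k + 1 then RatFunc.X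
            else if (i : ℕ) = k + 1 ∧ (j : ℕ) = k then 1
            else if (i : ℕ) = k + 1 ∧ (j : ℕ) = k + 1 then (0 : RatFunc ℚ)
            else if i = j then 1 else 0)
          = (if i = j then RatFunc.X ^ (j : ℕ) else 0) := by
        intro i
        by_cases h : i = j
        · subst h; simp [hja, hjb]
        · simp [hja, hjb, h]
      rw [Finset.sum_congr rfl fun i _ => key i, Finset.sum_ite_eq']
      simp

lemma list_prod_mulVec {n : ℕ} {l : List (Matrix (Fin n) (Fin n) (RatFunc ℚ))}
    {v : Fin n → RatFunc ℚ} (h : ∀ M ∈ l, M *ᵥ v = v) : l.prod *ᵥ v = v := by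
  induction l with
  | nil => simp [Matrix.one_mulVec]
  | cons M l ih =>
    rw [List.prod_cons, ← Matrix.mulVec_mulVec, ih fun N hN => h N (List.mem_cons_of_mem _ hN),
      h M (List.mem_cons_self)]

lemma list_prod_vecMul {n : ℕ} {l : List (Matrix (Fin n) (Fin n) (RatFunc ℚ))}
    {v : Fin n → RatFunc ℚ} (h : ∀ M ∈ l, v ᵥ* M = v) : v ᵥ* l.prod = v := by
  induction l with
  | nil => simp [Matrix.vecMul_one]
  | cons M l ih =>
    rw [List.prod_cons, ← Matrix.vecMul_vecMul, h M (List.mem_cons_self),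
      ih fun N hN => h N (List.mem_cons_of_mem _ hN)]

lemma pow_mulVec {n m : ℕ} {M : Matrix (Fin n) (Fin n) (RatFunc ℚ)}
    {v : Fin n → RatFunc ℚ} (h : M *ᵥ v = v) : M ^ m *ᵥ v = v := by
  induction m with
  | zero => simp [Matrix.one_mulVec]
  | succ m ih => rw [pow_succ, ← Matrix.mulVec_mulVec, h, ih]

lemma pow_vecMul {n m : ℕ} {M : Matrix (Fin n) (Fin n) (RatFunc ℚ)}
    {v : Fin n → RatFunc ℚ} (h : v ᵥ* M = v) : v ᵥ* M ^ m = v := by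
  induction m with
  | zero => simp [Matrix.vecMul_one]
  | succ m ih => rw [pow_succ, ← Matrix.vecMul_vecMul, ih, h]

/-- Absorption identities: `Ω_n P_n = P_n`, `P_n Ω_n = P_n`, hence `P_n Ω_n P_n = P_n`. -/
theorem stmt11 (n : ℕ) (hn : 2 ≤ n) :
    fullTwistQ n * limitMatrix n = limitMatrix n ∧
    limitMatrix n * fullTwistQ n = limitMatrix n ∧
    limitMatrix n * fullTwistQ n * limitMatrix n = limitMatrix n := by
  have hmem : ∀ M ∈ (List.range (n - 1)).map fun k => burauGenQ n k,
      ∃ k, k + 1 < n ∧ M = burauGenQ n k := by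
    intro M hM
    obtain ⟨k, hk, rfl⟩ := List.mem_map.1 hM
    exact ⟨k, by have := List.mem_range.1 hk; omega, rfl⟩
  have hΩ1 : fullTwistQ n *ᵥ (fun _ => (1 : RatFunc ℚ)) = fun _ => 1 := by
    refine pow_mulVec (list_prod_mulVec fun M hM => ?_)
    obtain ⟨k, hk, rfl⟩ := hmem M hM
    exact gen_mulVec_one n k hk
  have hΩ2 : (fun i : Fin n => RatFunc.X ^ (i : ℕ)) ᵥ* fullTwistQ n
      = fun i : Fin n => RatFunc.X ^ (i : ℕ) := by
    refine pow_vecMul (list_prod_vecMul fun M hM => ?_)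
    obtain ⟨k, hk, rfl⟩ := hmem M hM
    exact gen_vecMul_pow n k hk
  set s : RatFunc ℚ := ∑ m ∈ Finset.range n, RatFunc.X ^ m with hs
  have hs0 : s ≠ 0 := by
    have : s = algebraMap (Polynomial ℚ) (RatFunc ℚ)
        (∑ m ∈ Finset.range n, Polynomial.X ^ m) := by
      simp [hs, map_sum, map_pow, RatFunc.algebraMap_X]
    rw [this]
    refine RatFunc.algebraMap_ne_zero fun h => ?_
    have h0 : (∑ m ∈ Finset.range n, (Polynomial.X : Polynomial ℚ) ^ m).coeff 0 = 1 := by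
      rw [Polynomial.finset_sum_coeff]
      simp only [Polynomial.coeff_X_pow]
      rw [Finset.sum_ite_eq]
      simp
      omega
    rw [h] at h0
    simp at h0
  have h1 : fullTwistQ n * limitMatrix n = limitMatrix n := by
    ext i j
    simp only [Matrix.mul_apply, limitMatrix, Matrix.of_apply]
    rw [← Finset.sum_mul]
    have := congrFun hΩ1 i
    simp only [Matrix.mulVec, dotProduct, mul_one] at this
    rw [this, one_mul]
  have h2 : limitMatrix n * fullTwistQ n = limitMatrix n := by
    ext i j
    simp only [Matrix.mul_apply, limitMatrix, Matrix.of_apply]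
    have key : ∀ k : Fin n, RatFunc.X ^ (k : ℕ) / s * fullTwistQ n k j
        = RatFunc.X ^ (k : ℕ) * fullTwistQ n k j / s := fun k => div_mul_eq_mul_div _ _ _
    rw [Finset.sum_congr rfl fun k _ => key k, ← Finset.sum_div]
    have := congrFun hΩ2 j
    simp only [Matrix.vecMul, dotProduct] at this
    rw [this]
  have h3 : limitMatrix n * limitMatrix n = limitMatrix n := by
    ext i j
    simp only [Matrix.mul_apply, limitMatrix, Matrix.of_apply]
    rw [← Finset.sum_mul]
    have : ∑ k : Fin n, RatFunc.X ^ (k : ℕ) / s = 1 := by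
      rw [← Finset.sum_div, Fin.sum_univ_eq_sum_range (fun m => RatFunc.X ^ m) n, ← hs,
        div_self hs0]
    rw [this, one_mul]
  exact ⟨h1, h2, by rw [h2, h3]⟩
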